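/- For integers t ≥ 1, n, k ≥ 1, define a_n^{(t)}(x_1,...,x_k) = ∑ x_{i_1}···x_{i_n} over all 1 ≤ i_1 < ··· < i_n ≤ k with i_j ≡ j (mod t) for all j. Then a_n^{(t)}(x_1,...,x_k) = a_n^{(t)}(x_1,...,x_{k-1}) if k ≢ n (mod t), and a_n^{(t)}(x_1,...,x_k) = ∑_{h≥0} x_k x_{k-1}···x_{k-h+1} · a_{n-h}^{(t)}(x_1,...,x_{k-h-1}) if k ≡ n (mod t). -/

import Mathlib

/-- Brenti's generalized elementary symmetric function `a_n^{(t)}(x 1, …, x k)`: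
the sum of products `x i₁ ⋯ x iₙ` over all `1 ≤ i₁ < ⋯ < iₙ ≤ k` with
`iⱼ ≡ j (mod t)` for all `j`; here `v : Fin n → ℕ` is the `0`-indexed sequence,
so `v m ≡ m + 1 (mod t)`.  `a_0^{(t)} = 1`. -/
noncomputable def aFun (t : ℕ) (x : ℕ → ℝ) (k n : ℕ) : ℝ := by
  classical
  exact ∑ v ∈ (Fintype.piFinset fun _ : Fin n => Finset.Icc 1 k).filter
      (fun v : Fin n → ℕ =>
        StrictMono v ∧ ∀ m : Fin n, v m % t = ((m : ℕ) + 1) % t),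
    ∏ m : Fin n, x (v m)

lemma aFun_step (t : ℕ) (x : ℕ → ℝ) (n k : ℕ) (hk : 1 ≤ k) :
    aFun t x k (n+1) = aFun t x (k-1) (n+1) +
      (if k % t = (n+1) % t then x k * aFun t x (k-1) n else 0) := by
  classical
  unfold aFun
  rw [← Finset.sum_filter_add_sum_filter_not
    ((Fintype.piFinset fun _ : Fin (n+1) => Finset.Icc 1 k).filter
      (fun v : Fin (n+1) → ℕ =>
        StrictMono v ∧ ∀ m : Fin (n+1), v m % t = ((m : ℕ) + 1) % t))
    (fun v => v (Fin.last n) = k), add_comm]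
  congr 1
  · -- not-last part equals aFun (k-1) (n+1)
    apply Finset.sum_congr
    · rw [Finset.filter_filter]
      ext v
      simp only [Finset.mem_filter, Fintype.mem_piFinset, Finset.mem_Icc]
      constructor
      · rintro ⟨hmem, ⟨hsm, hres⟩, hne⟩
        have hlast : v (Fin.last n) ≤ k - 1 :=
          Nat.le_sub_one_of_lt (lt_of_le_of_ne (hmem (Fin.last n)).2 hne)
        exact ⟨fun m => ⟨(hmem m).1, le_trans (hsm.monotone (Fin.le_last m)) hlast⟩,
          hsm, hres⟩
      · rintro ⟨hmem, hsm, hres⟩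
        refine ⟨fun m => ⟨(hmem m).1, le_trans (hmem m).2 (Nat.sub_le k 1)⟩, ⟨hsm, hres⟩, ?_⟩
        exact Nat.ne_of_lt (lt_of_le_of_lt (hmem (Fin.last n)).2 (Nat.sub_lt hk one_pos))
    · intro _ _; rfl
  · -- last part
    by_cases hres : k % t = (n+1) % t
    · rw [if_pos hres, Finset.mul_sum]
      refine Finset.sum_bij' (fun v _ => fun m : Fin n => v m.castSucc)
        (fun w _ => Fin.snoc w k) ?_ ?_ ?_ ?_ ?_
      · rintro v hv
        simp only [Finset.mem_filter, Fintype.mem_piFinset, Finset.mem_Icc] at hv ⊢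
        obtain ⟨⟨hmem, hsm, hres'⟩, hlast⟩ := hv
        refine ⟨fun m => ⟨(hmem m.castSucc).1, ?_⟩, hsm.comp Fin.strictMono_castSucc, ?_⟩
        · exact Nat.le_sub_one_of_lt (hlast ▸ hsm (Fin.castSucc_lt_last m))
        · intro m; simpa using hres' m.castSucc
      · rintro w hw
        simp only [Finset.mem_filter, Fintype.mem_piFinset, Finset.mem_Icc] at hw ⊢
        obtain ⟨hmem, hsm, hres'⟩ := hw
        have hle : ∀ m : Fin n, w m < k := fun m =>
          lt_of_le_of_lt (hmem m).2 (Nat.sub_lt hk one_pos)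
        refine ⟨⟨fun m => ?_, ?_, fun m => ?_⟩, Fin.snoc_last _ _⟩
        · rcases Fin.eq_castSucc_or_eq_last m with ⟨m', rfl⟩ | rfl
          · rw [Fin.snoc_castSucc]; exact ⟨(hmem m').1, (hle m').le⟩
          · rw [Fin.snoc_last]; exact ⟨hk, le_rfl⟩
        · intro a b hab
          rcases Fin.eq_castSucc_or_eq_last b with ⟨b', rfl⟩ | rfl
          · obtain ⟨a', rfl⟩ := Fin.exists_castSucc_eq.mpr
              (ne_of_lt (lt_of_lt_of_le hab (Fin.castSucc_lt_last b').le))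
            rw [Fin.snoc_castSucc, Fin.snoc_castSucc]
            exact hsm (Fin.castSucc_lt_castSucc_iff.mp hab)
          · obtain ⟨a', rfl⟩ := Fin.exists_castSucc_eq.mpr (ne_of_lt hab)
            rw [Fin.snoc_castSucc, Fin.snoc_last]
            exact hle a'
        · rcases Fin.eq_castSucc_or_eq_last m with ⟨m', rfl⟩ | rfl
          · rw [Fin.snoc_castSucc]; simpa using hres' m'
          · rw [Fin.snoc_last]; simpa using hres
      · intro v hv
        simp only [Finset.mem_filter] at hv
        funext m
        rcases Fin.eq_castSucc_or_eq_last m with ⟨m', rfl⟩ | rfl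
        · simp [Fin.snoc_castSucc]
        · simp [Fin.snoc_last, hv.2]
      · intro w hw
        funext m
        simp [Fin.snoc_castSucc]
      · intro v hv
        simp only [Finset.mem_filter] at hv
        rw [Fin.prod_univ_castSucc, hv.2, mul_comm]
    · rw [if_neg hres]
      apply Finset.sum_eq_zero
      intro v hv
      simp only [Finset.mem_filter] at hv
      exact absurd (by simpa [hv.2] using hv.1.2.2 (Fin.last n)) hres

lemma aFun_zero_n (t : ℕ) (x : ℕ → ℝ) (k : ℕ) : aFun t x k 0 = 1 := by
  unfold aFun
  simp [StrictMono]

lemma aFun_sum (t : ℕ) (x : ℕ → ℝ) : ∀ n k : ℕ, k % t = n % t →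
    aFun t x k n = ∑ h ∈ Finset.range (min n k + 1),
      (∏ i ∈ Finset.Ioc (k - h) k, x i) * aFun t x (k - h - 1) (n - h) := by
  intro n
  induction n with
  | zero =>
    intro k _
    simp [aFun_zero_n, Finset.Ioc_self]
  | succ n IH =>
    intro k hres
    rcases Nat.eq_zero_or_pos k with rfl | hk
    · simp [Finset.Ioc_self]
    · have hres' : (k - 1) % t = n % t :=
        Nat.ModEq.add_right_cancel' 1 (by rw [Nat.sub_add_cancel hk]; exact hres)
      have hmin : min (n + 1) k = min n (k - 1) + 1 := by omega
      rw [aFun_step t x n k hk, if_pos hres, hmin, Finset.sum_range_succ']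
      have h0 : (∏ i ∈ Finset.Ioc (k - 0) k, x i) * aFun t x (k - 0 - 1) (n + 1 - 0)
          = aFun t x (k - 1) (n + 1) := by
        simp [Finset.Ioc_self]
      rw [h0, IH (k - 1) hres', add_comm (aFun t x (k - 1) (n + 1))]
      congr 1
      rw [Finset.mul_sum]
      apply Finset.sum_congr rfl
      intro h _
      have hksub : k - 1 + 1 = k := Nat.succ_pred_eq_of_pos hk
      have hprod := Finset.prod_Ioc_succ_top (Nat.sub_le (k - 1) h) x
      rw [hksub] at hprod
      rw [show k - (h + 1) = k - 1 - h from by omega,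
        show n + 1 - (h + 1) = n - h from by omega, hprod]
      ring

theorem aFun_recurrence (t : ℕ) (ht : 1 ≤ t) (x : ℕ → ℝ) (n k : ℕ)
    (hn : 1 ≤ n) (hk : 1 ≤ k) :
    (k % t ≠ n % t → aFun t x k n = aFun t x (k - 1) n) ∧
    (k % t = n % t →
      aFun t x k n =
        ∑ h ∈ Finset.range (min n k + 1),
          (∏ i ∈ Finset.Ioc (k - h) k, x i) * aFun t x (k - h - 1) (n - h)) := by
  constructor
  · intro hne
    obtain ⟨n', rfl⟩ : ∃ n', n = n' + 1 := ⟨n - 1, by omega⟩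
    rw [aFun_step t x n' k hk, if_neg hne, add_zero]
  · intro heq
    exact aFun_sum t x n k heq
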